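/- CM1 satisfies criterion (Z): fix any ε ∈ (0,1) and set ε_n = 1 − ε^{1/2ⁿ} and K_n = (ε^{1/2^{n−1}}, 1) for n ≥ 1. Then ε_n ≥ 0 and ε_n → 0, the K_n are nonempty Borel sets with K₁ ⊃ K₂ ⊃ … and ⋂_{n=1}^∞ K_n = ∅, and p(x,K_n) ≥ 1 − ε_n for every x ∈ K_{n+1} and every n. Consequently (by the criterion-Z theorem) CM1 has an invariant purely finitely additive probability measure μ with μ((ε^{1/2^{n−1}},1)) = 1 for all n. -/

import Mathlib

open MeasureTheory Set Filter Topology Function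

/-- A bounded finitely additive set function on the σ-algebra. -/
def IsFinAdd {X : Type*} [MeasurableSpace X] (μ : Set X → ℝ) : Prop :=
  μ ∅ = 0 ∧ ∀ E F : Set X, MeasurableSet E → MeasurableSet F → Disjoint E F →
    μ (E ∪ F) = μ E + μ F

/-- Nonnegativity on measurable sets. -/
def IsNonnegSF {X : Type*} [MeasurableSpace X] (μ : Set X → ℝ) : Prop :=
  ∀ E : Set X, MeasurableSet E → 0 ≤ μ E

/-- Countable additivity on the σ-algebra. -/
def IsCtblAdd {X : Type*} [MeasurableSpace X] (μ : Set X → ℝ) : Prop :=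
  ∀ E : ℕ → Set X, (∀ n, MeasurableSet (E n)) → Pairwise (Disjoint on E) →
    HasSum (fun n => μ (E n)) (μ (⋃ n, E n))

/-- A nonnegative finitely additive measure is purely finitely additive if the only
countably additive measure `lam` with `0 ≤ lam ≤ μ` is `lam = 0`. -/
def IsPurelyFinAdd {X : Type*} [MeasurableSpace X] (μ : Set X → ℝ) : Prop :=
  ∀ lam : Set X → ℝ, IsFinAdd lam → IsCtblAdd lam →
    (∀ E, MeasurableSet E → 0 ≤ lam E) → (∀ E, MeasurableSet E → lam E ≤ μ E) →
    ∀ E, MeasurableSet E → lam E = 0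

/-- The integral of a bounded measurable function with respect to a (finitely additive)
set function, defined by the layer-cake formula. -/
noncomputable def faIntegral {X : Type*} [MeasurableSpace X] (μ : Set X → ℝ) (f : X → ℝ) : ℝ :=
  (∫ t in Set.Ioi (0:ℝ), μ {x | t < f x}) - (∫ t in Set.Ioi (0:ℝ), μ {x | f x < -t})

/-- The Dirac measure at `y`, as a set function. -/
noncomputable def diracSF (y : ℝ) (E : Set ℝ) : ℝ := E.indicator (fun _ => (1:ℝ)) y

/-- The transition function of CM1: `p(x,·) = x·δ_{x²} + (1-x)·δ₀` on `(0,1)`,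
`p(0,·) = δ₀`, `p(1,·) = δ₁` (the formula below specializes correctly at `0` and `1`). -/
noncomputable def p1 (x : ℝ) (E : Set ℝ) : ℝ :=
  x * diracSF (x ^ 2) E + (1 - x) * diracSF 0 E

/-- The transition function of CM2: `p(x,·) = (1-x)·δ_{x²} + x·δ₀` on `(0,1)`,
`p(0,·) = δ₀`, `p(1,·) = δ₁`. -/
noncomputable def p2 (x : ℝ) (E : Set ℝ) : ℝ :=
  if x = 1 then diracSF 1 E else (1 - x) * diracSF (x ^ 2) E + x * diracSF 0 E

/-- The transition function of CM3: the CM1 rule on `[0,1/2]`, the CM2 rule on `(1/2,1)`,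
`p(1,·) = δ₁`. -/
noncomputable def p3 (x : ℝ) (E : Set ℝ) : ℝ :=
  if x = 1 then diracSF 1 E
  else if x ≤ 1 / 2 then x * diracSF (x ^ 2) E + (1 - x) * diracSF 0 E
  else (1 - x) * diracSF (x ^ 2) E + x * diracSF 0 E

/-- The `n`-step transition function of CM1 (`p1n 0` is the identity kernel, and
`p1n (n+1) x E = ∫ p1n n (y,E) p(x,dy)` is the integral convolution). -/
noncomputable def p1n : ℕ → ℝ → Set ℝ → ℝ
  | 0 => fun x E => diracSF x E
  | n + 1 => fun x E => faIntegral (p1 x) fun y => p1n n y E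

/-- The `n`-step transition function of CM2. -/
noncomputable def p2n : ℕ → ℝ → Set ℝ → ℝ
  | 0 => fun x E => diracSF x E
  | n + 1 => fun x E => faIntegral (p2 x) fun y => p2n n y E

/-- The `n`-step transition function of CM3. -/
noncomputable def p3n : ℕ → ℝ → Set ℝ → ℝ
  | 0 => fun x E => diracSF x E
  | n + 1 => fun x E => faIntegral (p3 x) fun y => p3n n y E

/-- `ε_n = 1 - ε^{1/2ⁿ}`. -/
noncomputable def epsSeq (ε : ℝ) (n : ℕ) : ℝ := 1 - ε ^ ((1:ℝ) / 2 ^ n)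

/-- `K_n = (ε^{1/2^{n-1}}, 1)`. -/
noncomputable def Kseq (ε : ℝ) (n : ℕ) : Set ℝ := Set.Ioo (ε ^ ((1:ℝ) / 2 ^ (n - 1))) 1


/-- Cesàro averages of a sequence. -/
noncomputable def cesaro (u : ℕ → ℝ) (N : ℕ) : ℝ := (∑ k ∈ Finset.range N, u k) / N

/-- A Banach-limit-like functional: the limit along an ultrafilter of Cesàro averages. -/
noncomputable def BL (U : Ultrafilter ℕ) (u : ℕ → ℝ) : ℝ := lim (Filter.map (cesaro u) U)

lemma cesaro_abs_le {u : ℕ → ℝ} {C : ℝ} (hu : ∀ k, |u k| ≤ C) (N : ℕ) :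
    |cesaro u N| ≤ C := by
  have hC : 0 ≤ C := le_trans (abs_nonneg _) (hu 0)
  rcases Nat.eq_zero_or_pos N with h | h
  · simp [cesaro, h, hC]
  · have h1 : |∑ k ∈ Finset.range N, u k| ≤ N * C := by
      calc |∑ k ∈ Finset.range N, u k| ≤ ∑ k ∈ Finset.range N, |u k| :=
            Finset.abs_sum_le_sum_abs _ _
        _ ≤ ∑ _k ∈ Finset.range N, C := Finset.sum_le_sum fun k _ => hu k
        _ = N * C := by simp [mul_comm]
    have hN : (0:ℝ) < N := by exact_mod_cast h
    rw [cesaro, abs_div, abs_of_pos hN, div_le_iff₀ hN]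
    linarith [h1]

lemma BL_spec (U : Ultrafilter ℕ) {u : ℕ → ℝ} {C : ℝ} (hu : ∀ k, |u k| ≤ C) :
    Tendsto (cesaro u) U (𝓝 (BL U u)) := by
  have hmem : ∀ N, cesaro u N ∈ Icc (-C) C := fun N => abs_le.mp (cesaro_abs_le hu N)
  obtain ⟨x, _, hle⟩ := (isCompact_Icc (a := -C) (b := C)).ultrafilter_le_nhds
    (U.map (cesaro u)) (by
      rw [Ultrafilter.coe_map, le_principal_iff, mem_map]
      exact univ_mem' hmem)
  rw [Ultrafilter.coe_map] at hle
  exact le_nhds_lim ⟨x, hle⟩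

lemma BL_unique (U : Ultrafilter ℕ) {u : ℕ → ℝ} {C : ℝ} (hu : ∀ k, |u k| ≤ C)
    {c : ℝ} (h : Tendsto (cesaro u) U (𝓝 c)) : BL U u = c :=
  tendsto_nhds_unique (BL_spec U hu) h

lemma cesaro_add (u v : ℕ → ℝ) (N : ℕ) :
    cesaro (fun k => u k + v k) N = cesaro u N + cesaro v N := by
  simp [cesaro, Finset.sum_add_distrib, add_div]

lemma BL_add (U : Ultrafilter ℕ) {u v : ℕ → ℝ} {C D : ℝ}
    (hu : ∀ k, |u k| ≤ C) (hv : ∀ k, |v k| ≤ D) :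
    BL U (fun k => u k + v k) = BL U u + BL U v := by
  have hb : ∀ k, |u k + v k| ≤ C + D := fun k =>
    (abs_add_le _ _).trans (add_le_add (hu k) (hv k))
  refine BL_unique U hb ?_
  have := (BL_spec U hu).add (BL_spec U hv)
  refine this.congr fun N => (cesaro_add u v N).symm

lemma BL_nonneg (U : Ultrafilter ℕ) {u : ℕ → ℝ} {C : ℝ} (hu : ∀ k, |u k| ≤ C)
    (h : ∀ k, 0 ≤ u k) : 0 ≤ BL U u := by
  refine ge_of_tendsto (BL_spec U hu) (Eventually.of_forall fun N => ?_)
  exact div_nonneg (Finset.sum_nonneg fun k _ => h k) (Nat.cast_nonneg N)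

lemma BL_congr_atTop (U : Ultrafilter ℕ) (hU : (U : Filter ℕ) ≤ atTop)
    {u v : ℕ → ℝ} {C D : ℝ} (hu : ∀ k, |u k| ≤ C) (hv : ∀ k, |v k| ≤ D)
    (h : Tendsto (fun N => cesaro u N - cesaro v N) atTop (𝓝 0)) :
    BL U u = BL U v := by
  refine BL_unique U hu ?_
  have h2 : Tendsto (fun N => cesaro v N + (cesaro u N - cesaro v N)) U (𝓝 (BL U v + 0)) :=
    (BL_spec U hv).add (h.mono_left hU)
  simpa using h2.congr fun N => by ring

lemma cesaro_eventually_zero {w : ℕ → ℝ} {N₀ : ℕ} (hw : ∀ k, N₀ ≤ k → w k = 0) :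
    Tendsto (cesaro w) atTop (𝓝 0) := by
  have key : ∀ N, N₀ ≤ N → cesaro w N = (∑ k ∈ Finset.range N₀, w k) / N := by
    intro N hN
    have : ∑ k ∈ Finset.range N, w k = ∑ k ∈ Finset.range N₀, w k := by
      refine (Finset.sum_subset (Finset.range_subset_range.mpr hN) ?_).symm
      intro x _ hx
      exact hw x (le_of_not_gt (fun h => hx (Finset.mem_range.mpr h)))
    rw [cesaro, this]
  refine (tendsto_const_div_atTop_nhds_zero_nat (∑ k ∈ Finset.range N₀, w k)).congr' ?_
  filter_upwards [eventually_ge_atTop N₀] with N hN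
  exact (key N hN).symm

lemma BL_congr_eventually (U : Ultrafilter ℕ) (hU : (U : Filter ℕ) ≤ atTop)
    {u v : ℕ → ℝ} {C D : ℝ} (hu : ∀ k, |u k| ≤ C) (hv : ∀ k, |v k| ≤ D)
    {N₀ : ℕ} (h : ∀ k, N₀ ≤ k → u k = v k) : BL U u = BL U v := by
  refine BL_congr_atTop U hU hu hv ?_
  have : ∀ N, cesaro u N - cesaro v N = cesaro (fun k => u k - v k) N := by
    intro N; simp [cesaro, Finset.sum_sub_distrib, sub_div]
  refine (cesaro_eventually_zero (w := fun k => u k - v k) (N₀ := N₀) ?_).congr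
    fun N => (this N).symm
  intro k hk; simp [h k hk]

lemma BL_shift (U : Ultrafilter ℕ) (hU : (U : Filter ℕ) ≤ atTop)
    {u : ℕ → ℝ} {C : ℝ} (hu : ∀ k, |u k| ≤ C) :
    BL U (fun k => u (k + 1)) = BL U u := by
  refine BL_congr_atTop U hU (fun k => hu (k+1)) hu ?_
  have key : ∀ N : ℕ, cesaro (fun k => u (k+1)) N - cesaro u N = (u N - u 0) / N := by
    intro N
    have h1 : ∑ k ∈ Finset.range N, u (k+1) = (∑ k ∈ Finset.range N, u k) + u N - u 0 := by
      have := Finset.sum_range_succ' u N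
      have h2 := Finset.sum_range_succ u N
      linarith [this, h2]
    rw [cesaro, cesaro, h1]
    ring
  refine squeeze_zero_norm (fun N => ?_) (by
    simpa using tendsto_const_div_atTop_nhds_zero_nat (2*C))
  rw [key]
  rcases Nat.eq_zero_or_pos N with h | h
  · simp [h]
  · have hN : (0:ℝ) < N := by exact_mod_cast h
    rw [Real.norm_eq_abs, abs_div, abs_of_pos hN, div_le_div_iff_of_pos_right hN]
    calc |u N - u 0| ≤ |u N| + |u 0| := abs_sub _ _
      _ ≤ 2 * C := by linarith [hu N, hu 0]

lemma BL_const_one (U : Ultrafilter ℕ) (hU : (U : Filter ℕ) ≤ atTop) :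
    BL U (fun _ => (1:ℝ)) = 1 := by
  refine BL_unique (C := 1) U (fun k => by norm_num) ?_
  refine (tendsto_const_nhds.congr' ?_).mono_left hU
  filter_upwards [eventually_ge_atTop 1] with N hN
  have hN : (0:ℝ) < N := by exact_mod_cast hN
  simp [cesaro, hN.ne']


lemma diracSF_nonneg (y : ℝ) (E : Set ℝ) : 0 ≤ diracSF y E :=
  Set.indicator_nonneg (fun _ _ => zero_le_one) y

lemma diracSF_le_one (y : ℝ) (E : Set ℝ) : diracSF y E ≤ 1 := by
  classical
  unfold diracSF; rw [Set.indicator_apply]; split <;> norm_num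

lemma diracSF_abs_le (y : ℝ) (E : Set ℝ) : |diracSF y E| ≤ 1 := by
  rw [abs_of_nonneg (diracSF_nonneg y E)]; exact diracSF_le_one y E

lemma diracSF_of_mem {y : ℝ} {E : Set ℝ} (h : y ∈ E) : diracSF y E = 1 :=
  Set.indicator_of_mem h _

lemma diracSF_of_not_mem {y : ℝ} {E : Set ℝ} (h : y ∉ E) : diracSF y E = 0 :=
  Set.indicator_of_notMem h _

noncomputable def U0 : Ultrafilter ℕ :=
  @Ultrafilter.of ℕ Filter.cofinite Filter.cofinite_neBot

lemma U0_le_atTop : (U0 : Filter ℕ) ≤ atTop := by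
  rw [← Nat.cofinite_eq_atTop]
  exact Ultrafilter.of_le _

/-- the points `ε^{1/2^k}`. -/
noncomputable def xseq (ε : ℝ) (k : ℕ) : ℝ := ε ^ ((1:ℝ)/2^k)

/-- the invariant pure finitely additive measure. -/
noncomputable def muZ (ε : ℝ) (E : Set ℝ) : ℝ := BL U0 (fun k => diracSF (xseq ε k) E)

section xseq
variable {ε : ℝ} (hε : ε ∈ Set.Ioo (0:ℝ) 1)
include hε

lemma xseq_pos (k : ℕ) : 0 < xseq ε k := Real.rpow_pos_of_pos hε.1 _

lemma xseq_lt_one (k : ℕ) : xseq ε k < 1 :=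
  Real.rpow_lt_one hε.1.le hε.2 (by positivity)

lemma xseq_sq (k : ℕ) : (xseq ε (k+1)) ^ 2 = xseq ε k := by
  unfold xseq
  rw [← Real.rpow_natCast (ε ^ ((1:ℝ)/2^(k+1))) 2, ← Real.rpow_mul hε.1.le]
  congr 1
  rw [pow_succ]
  push_cast
  field_simp

lemma xseq_tendsto : Tendsto (xseq ε) atTop (𝓝 1) := by
  have h0 : Tendsto (fun k : ℕ => (1:ℝ)/2^k) atTop (𝓝 0) := by
    have h := tendsto_pow_atTop_nhds_zero_of_lt_one (r := (1:ℝ)/2) (by norm_num) (by norm_num)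
    exact h.congr fun n => by rw [div_pow, one_pow]
  have h2 := (tendsto_const_nhds (x := ε) (f := atTop (α := ℕ))).rpow h0 (Or.inl hε.1.ne')
  rw [Real.rpow_zero] at h2
  exact h2.congr fun k => rfl

lemma xseq_mem_Ioo (k : ℕ) : xseq ε k ∈ Set.Ioo (0:ℝ) 1 :=
  ⟨xseq_pos hε k, xseq_lt_one hε k⟩

end xseq

lemma BL_zero (U : Ultrafilter ℕ) : BL U (fun _ => (0:ℝ)) = 0 := by
  refine BL_unique (C := 0) U (fun k => by norm_num) ?_
  exact tendsto_const_nhds.congr fun N => by simp [cesaro]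

lemma muZ_nonneg (ε : ℝ) (E : Set ℝ) : 0 ≤ muZ ε E :=
  BL_nonneg U0 (fun k => diracSF_abs_le _ _) (fun k => diracSF_nonneg _ _)

lemma muZ_empty (ε : ℝ) : muZ ε (∅ : Set ℝ) = 0 := by
  unfold muZ
  simpa [diracSF_of_not_mem (Set.notMem_empty _)] using BL_zero U0

lemma muZ_union (ε : ℝ) {E F : Set ℝ} (h : Disjoint E F) :
    muZ ε (E ∪ F) = muZ ε E + muZ ε F := by
  unfold muZ
  have key : ∀ k, diracSF (xseq ε k) (E ∪ F) =
      diracSF (xseq ε k) E + diracSF (xseq ε k) F := by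
    intro k
    unfold diracSF
    rw [Set.indicator_union_of_disjoint h]
  calc BL U0 (fun k => diracSF (xseq ε k) (E ∪ F))
      = BL U0 (fun k => diracSF (xseq ε k) E + diracSF (xseq ε k) F) := by
        congr 1; funext k; exact key k
    _ = _ := BL_add U0 (fun k => diracSF_abs_le _ _) (fun k => diracSF_abs_le _ _)

lemma muZ_univ (ε : ℝ) : muZ ε (Set.univ : Set ℝ) = 1 := by
  unfold muZ
  simpa [diracSF_of_mem (Set.mem_univ _)] using BL_const_one U0 U0_le_atTop

/-- If the points are eventually in `E`, then `muZ ε E = 1`. -/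
lemma muZ_eq_one (ε : ℝ) {E : Set ℝ} {N : ℕ} (h : ∀ k, N ≤ k → xseq ε k ∈ E) :
    muZ ε E = 1 := by
  unfold muZ
  rw [BL_congr_eventually U0 U0_le_atTop (fun k => diracSF_abs_le _ _)
    (fun k => (by norm_num : |(1:ℝ)| ≤ 1)) (fun k hk => diracSF_of_mem (h k hk))]
  exact BL_const_one U0 U0_le_atTop

/-- If the points are never in `E`, then `muZ ε E = 0`. -/
lemma muZ_eq_zero (ε : ℝ) {E : Set ℝ} (h : ∀ k, xseq ε k ∉ E) : muZ ε E = 0 := by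
  unfold muZ
  simpa [diracSF_of_not_mem (h _)] using BL_zero U0

lemma p1_nonneg {x : ℝ} (hx : x ∈ Set.Icc (0:ℝ) 1) (E : Set ℝ) : 0 ≤ p1 x E := by
  unfold p1
  have h1 := diracSF_nonneg (x ^ 2) E
  have h2 := diracSF_nonneg 0 E
  nlinarith [hx.1, hx.2]

lemma p1_le_one {x : ℝ} (hx : x ∈ Set.Icc (0:ℝ) 1) (E : Set ℝ) : p1 x E ≤ 1 := by
  unfold p1
  have h1 := diracSF_le_one (x ^ 2) E
  have h2 := diracSF_le_one 0 E
  have h3 := diracSF_nonneg (x ^ 2) E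
  have h4 := diracSF_nonneg 0 E
  nlinarith [hx.1, hx.2]

/-- The invariance of `muZ` under the CM1 kernel. -/
lemma muZ_invariant {ε : ℝ} (hε : ε ∈ Set.Ioo (0:ℝ) 1) (E : Set ℝ) :
    faIntegral (muZ ε) (fun x => p1 x E) = muZ ε E := by
  set f : ℝ → ℝ := fun x => p1 x E with hf
  have hfx0 : ∀ k, 0 ≤ f (xseq ε k) := fun k =>
    p1_nonneg (Set.mem_Icc_of_Ioo (xseq_mem_Ioo hε k)) E
  have hfx1 : ∀ k, f (xseq ε k) ≤ 1 := fun k =>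
    p1_le_one (Set.mem_Icc_of_Ioo (xseq_mem_Ioo hε k)) E
  have hneg : ∀ t ∈ Set.Ioi (0:ℝ), muZ ε {x | f x < -t} = 0 := by
    intro t ht
    refine muZ_eq_zero ε fun k => ?_
    simp only [Set.mem_setOf_eq, not_lt]
    have := hfx0 k
    simp only [Set.mem_Ioi] at ht
    linarith
  have hpos : ∀ t ∈ Set.Ioi (0:ℝ),
      muZ ε {x | t < f x} = (Set.Ioo (0:ℝ) 1).indicator (fun _ => muZ ε E) t := by
    intro t ht
    simp only [Set.mem_Ioi] at ht
    by_cases htlt : t < 1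
    · rw [Set.indicator_of_mem (Set.mem_Ioo.mpr ⟨ht, htlt⟩)]
      set S := {x | t < f x} with hS
      -- choose N such that for k ≥ N, xseq ε k > t and xseq ε k > 1 - t
      have hev : ∀ᶠ k in atTop, t < xseq ε k ∧ 1 - t < xseq ε k := by
        have h1 := (xseq_tendsto hε).eventually (eventually_gt_nhds htlt)
        have h2 := (xseq_tendsto hε).eventually
          (eventually_gt_nhds (by linarith : 1 - t < 1))
        exact h1.and h2
      obtain ⟨N, hN⟩ := eventually_atTop.mp hev
      have key : ∀ k, N ≤ k → diracSF (xseq ε (k+1)) S = diracSF (xseq ε k) E := by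
        intro k hk
        obtain ⟨hxt, hxt'⟩ := hN (k+1) (le_trans hk (Nat.le_succ k))
        have hx01 := xseq_mem_Ioo hε (k+1)
        have hd0 := diracSF_nonneg (0:ℝ) E
        have hd1 := diracSF_le_one (0:ℝ) E
        by_cases hE : xseq ε k ∈ E
        · rw [diracSF_of_mem hE]
          refine diracSF_of_mem ?_
          show t < f (xseq ε (k+1))
          have : f (xseq ε (k+1)) =
              xseq ε (k+1) * 1 + (1 - xseq ε (k+1)) * diracSF 0 E := by
            simp only [hf, p1, xseq_sq hε k, diracSF_of_mem hE]
          rw [this]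
          nlinarith [hx01.1, hx01.2]
        · rw [diracSF_of_not_mem hE]
          refine diracSF_of_not_mem ?_
          show ¬ t < f (xseq ε (k+1))
          have : f (xseq ε (k+1)) =
              xseq ε (k+1) * 0 + (1 - xseq ε (k+1)) * diracSF 0 E := by
            simp only [hf, p1, xseq_sq hε k, diracSF_of_not_mem hE]
          rw [this, not_lt]
          nlinarith [hx01.1, hx01.2]
      -- muZ S = BL (dirac S ∘ xseq) = BL (shifted) = BL (dirac E ∘ xseq) = muZ E
      show muZ ε S = muZ ε E
      unfold muZ
      rw [← BL_shift U0 U0_le_atTop (fun k => diracSF_abs_le (xseq ε k) S)]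
      exact BL_congr_eventually U0 U0_le_atTop (fun k => diracSF_abs_le _ _)
        (fun k => diracSF_abs_le _ _) key
    · rw [Set.indicator_of_notMem (fun hmem => htlt hmem.2)]
      refine muZ_eq_zero ε fun k => ?_
      simp only [Set.mem_setOf_eq, not_lt]
      exact le_trans (hfx1 k) (not_lt.mp htlt)
  -- assemble the integrals
  unfold faIntegral
  rw [setIntegral_congr_fun measurableSet_Ioi hneg,
      setIntegral_congr_fun measurableSet_Ioi hpos]
  rw [integral_zero, sub_zero]
  rw [MeasureTheory.integral_indicator measurableSet_Ioo,
      MeasureTheory.Measure.restrict_restrict measurableSet_Ioo,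
      Set.inter_eq_left.mpr Set.Ioo_subset_Ioi_self,
      MeasureTheory.setIntegral_const]
  simp [Real.volume_Ioo]


lemma Kseq_succ (ε : ℝ) (n : ℕ) : Kseq ε (n + 1) = Set.Ioo (xseq ε n) 1 := by
  simp [Kseq, xseq]

lemma one_sub_epsSeq (ε : ℝ) (n : ℕ) : 1 - epsSeq ε n = xseq ε n := by
  simp [epsSeq, xseq]

lemma xseq_mem_Kseq {ε : ℝ} (hε : ε ∈ Set.Ioo (0:ℝ) 1) {n k : ℕ} (hn : 1 ≤ n)
    (hk : n ≤ k) : xseq ε k ∈ Kseq ε n := by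
  obtain ⟨m, rfl⟩ : ∃ m, n = m + 1 := ⟨n - 1, by omega⟩
  rw [Kseq_succ]
  refine ⟨?_, xseq_lt_one hε k⟩
  unfold xseq
  apply Real.rpow_lt_rpow_of_exponent_gt hε.1 hε.2
  apply one_div_lt_one_div_of_lt (by positivity)
  exact pow_lt_pow_right₀ one_lt_two (by omega)

lemma muZ_Kseq {ε : ℝ} (hε : ε ∈ Set.Ioo (0:ℝ) 1) {n : ℕ} (hn : 1 ≤ n) :
    muZ ε (Kseq ε n) = 1 :=
  muZ_eq_one ε (N := n) fun k hk => xseq_mem_Kseq hε hn hk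

lemma lam_mono {lam : Set ℝ → ℝ} (hfa : IsFinAdd lam)
    (hnn : ∀ E, MeasurableSet E → 0 ≤ lam E) {A B : Set ℝ}
    (hA : MeasurableSet A) (hB : MeasurableSet B) (hAB : A ⊆ B) : lam A ≤ lam B := by
  have h1 : lam (A ∪ (B \ A)) = lam A + lam (B \ A) :=
    hfa.2 A (B \ A) hA (hB.diff hA) disjoint_sdiff_self_right
  rw [Set.union_diff_cancel hAB] at h1
  have h2 := hnn (B \ A) (hB.diff hA)
  linarith

/-- CM1 satisfies criterion (Z) with `ε_n = 1 - ε^{1/2ⁿ}` and `K_n = (ε^{1/2^{n-1}}, 1)`;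
consequently CM1 has an invariant purely finitely additive probability measure `μ` with
`μ(K_n) = 1` for all `n ≥ 1`. -/
theorem cm1_criterionZ (ε : ℝ) (hε : ε ∈ Set.Ioo (0:ℝ) 1) :
    (∀ n : ℕ, 1 ≤ n → 0 ≤ epsSeq ε n) ∧
    Tendsto (epsSeq ε) atTop (nhds 0) ∧
    (∀ n : ℕ, 1 ≤ n → (Kseq ε n).Nonempty ∧ MeasurableSet (Kseq ε n)) ∧
    (∀ n : ℕ, 1 ≤ n → Kseq ε (n + 1) ⊆ Kseq ε n) ∧
    (⋂ (n : ℕ) (_ : 1 ≤ n), Kseq ε n) = ∅ ∧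
    (∀ n : ℕ, 1 ≤ n → ∀ x ∈ Kseq ε (n + 1), 1 - epsSeq ε n ≤ p1 x (Kseq ε n)) ∧
    ∃ μ : Set ℝ → ℝ, IsFinAdd μ ∧ IsNonnegSF μ ∧ μ Set.univ = 1 ∧ IsPurelyFinAdd μ ∧
      (∀ E : Set ℝ, MeasurableSet E → faIntegral μ (fun x => p1 x E) = μ E) ∧
      ∀ n : ℕ, 1 ≤ n → μ (Kseq ε n) = 1 := by
  obtain ⟨hε0, hε1⟩ := hε
  have hε' : ε ∈ Set.Ioo (0:ℝ) 1 := ⟨hε0, hε1⟩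
  refine ⟨?_, ?_, ?_, ?_, ?_, ?_, ?_⟩
  · -- 0 ≤ epsSeq
    intro n _
    have : ε ^ ((1:ℝ)/2^n) ≤ 1 := Real.rpow_le_one hε0.le hε1.le (by positivity)
    simp only [epsSeq]
    linarith
  · -- tendsto
    have h := tendsto_const_nhds (x := (1:ℝ)) (f := atTop (α := ℕ)) |>.sub (xseq_tendsto hε')
    rw [sub_self] at h
    exact h.congr fun n => by rw [← one_sub_epsSeq]; ring
  · -- nonempty & measurable
    intro n _
    refine ⟨Set.nonempty_Ioo.mpr ?_, measurableSet_Ioo⟩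
    exact Real.rpow_lt_one hε0.le hε1 (by positivity)
  · -- decreasing
    intro n hn
    obtain ⟨m, rfl⟩ : ∃ m, n = m + 1 := ⟨n - 1, by omega⟩
    rw [Kseq_succ, Kseq_succ]
    refine Set.Ioo_subset_Ioo_left ?_
    unfold xseq
    apply Real.rpow_le_rpow_of_exponent_ge hε0 hε1.le
    apply one_div_le_one_div_of_le (by positivity)
    exact pow_le_pow_right₀ one_le_two (by omega)
  · -- empty intersection
    rw [Set.eq_empty_iff_forall_notMem]
    intro y hy
    simp only [Set.mem_iInter] at hy
    have h1 : y < 1 := (hy 1 le_rfl).2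
    obtain ⟨k, hk⟩ := ((xseq_tendsto hε').eventually (eventually_gt_nhds h1)).exists
    have h2 := (hy (k + 1) (by omega))
    rw [Kseq_succ] at h2
    exact absurd h2.1 (not_lt.mpr hk.le)
  · -- criterion Z inequality
    intro n hn x hx
    obtain ⟨m, rfl⟩ : ∃ m, n = m + 1 := ⟨n - 1, by omega⟩
    rw [Kseq_succ] at hx
    rw [one_sub_epsSeq, Kseq_succ]
    have hx2 : x ^ 2 ∈ Set.Ioo (xseq ε m) 1 := by
      constructor
      · rw [← xseq_sq hε' m]
        exact pow_lt_pow_left₀ hx.1 (xseq_pos hε' _).le two_ne_zero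
      · exact pow_lt_one₀ (le_trans (xseq_pos hε' _).le hx.1.le) hx.2 two_ne_zero
    have h0 : (0:ℝ) ∉ Set.Ioo (xseq ε m) 1 := fun h => absurd h.1 (not_lt.mpr (xseq_pos hε' m).le)
    rw [p1, diracSF_of_mem hx2, diracSF_of_not_mem h0]
    have := (xseq_pos hε' (m+1)).le.trans hx.1.le
    nlinarith [hx.1, hx.2]
  · -- the invariant purely finitely additive measure
    refine ⟨muZ ε, ⟨muZ_empty ε, fun E F _ _ h => muZ_union ε h⟩,
      fun E _ => muZ_nonneg ε E, muZ_univ ε, ?_, fun E _ => muZ_invariant hε' E,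
      fun n hn => muZ_Kseq hε' hn⟩
    -- purely finitely additive
    intro lam hfa hca hnn hle E hE
    have hKm : ∀ n : ℕ, MeasurableSet (Kseq ε (n+1)) := fun n => measurableSet_Ioo
    have hmuC : ∀ n : ℕ, muZ ε ((Kseq ε (n+1))ᶜ) = 0 := by
      intro n
      have h1 : muZ ε (Kseq ε (n+1) ∪ (Kseq ε (n+1))ᶜ) =
          muZ ε (Kseq ε (n+1)) + muZ ε ((Kseq ε (n+1))ᶜ) :=
        muZ_union ε disjoint_compl_right
      rw [Set.union_compl_self, muZ_univ, muZ_Kseq hε' (by omega)] at h1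
      linarith
    have hlamC : ∀ n : ℕ, lam ((Kseq ε (n+1))ᶜ) = 0 := by
      intro n
      have h1 := hle _ (hKm n).compl
      have h2 := hnn _ (hKm n).compl
      rw [hmuC n] at h1
      linarith
    set C : ℕ → Set ℝ := fun n => (Kseq ε (n+1))ᶜ with hC
    have hCmeas : ∀ n, MeasurableSet (C n) := fun n => (hKm n).compl
    have hCunion : (⋃ n, C n) = Set.univ := by
      rw [Set.eq_univ_iff_forall]
      intro y
      simp only [Set.mem_iUnion, hC, Set.mem_compl_iff]
      by_cases hy : y < 1
      · obtain ⟨k, hk⟩ := ((xseq_tendsto hε').eventually (eventually_gt_nhds hy)).exists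
        exact ⟨k, fun hmem => by rw [Kseq_succ] at hmem; exact absurd hmem.1 (not_lt.mpr hk.le)⟩
      · exact ⟨0, fun hmem => by rw [Kseq_succ] at hmem; exact hy hmem.2⟩
    have hDmeas : ∀ n, MeasurableSet (disjointed C n) := MeasurableSet.disjointed hCmeas
    have hsum := hca (disjointed C) hDmeas (disjoint_disjointed C)
    rw [iUnion_disjointed, hCunion] at hsum
    have hzero : ∀ n, lam (disjointed C n) = 0 := by
      intro n
      have h1 : lam (disjointed C n) ≤ lam (C n) :=
        lam_mono hfa hnn (hDmeas n) (hCmeas n) (disjointed_subset C n)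
      have h2 := hnn _ (hDmeas n)
      rw [hlamC n] at h1
      linarith
    have huniv : lam Set.univ = 0 := by
      have : HasSum (fun n => lam (disjointed C n)) 0 := by
        simp only [hzero]
        exact hasSum_zero
      exact (hsum.unique this)
    have h1 : lam E ≤ lam Set.univ :=
      lam_mono hfa hnn hE MeasurableSet.univ (Set.subset_univ E)
    have h2 := hnn E hE
    rw [huniv] at h1
    linarith
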